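/- For every ε > 0, the function p ↦ ω(p,ε) is continuous on [0,1]. -/

import Mathlib

open Real

/-- Bernoulli Kullback–Leibler divergence `kl(a‖b)`. -/
noncomputable def klBer (a b : ℝ) : ℝ :=
  a * Real.log (a / b) + (1 - a) * Real.log ((1 - a) / (1 - b))

/-- `ω(p, ε)`: for `p ∈ (0, e^{-ε}]` the unique `η ∈ [0, 1 - p]` with
`kl(p+η‖p) = ε`, `ω(0, ε) = 0`, and `ω(p, ε) = 1 - p` for `p ∈ (e^{-ε}, 1]`. -/
noncomputable def omegaKL (p ε : ℝ) : ℝ :=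
  if p = 0 then 0
  else if p ≤ Real.exp (-ε) then
    sInf {η : ℝ | η ∈ Set.Icc 0 (1 - p) ∧ klBer (p + η) p = ε}
  else 1 - p

open Set Filter

noncomputable def klF (a b : ℝ) : ℝ :=
  a * Real.log a + (1 - a) * Real.log (1 - a) - a * Real.log b - (1 - a) * Real.log (1 - b)

lemma klBer_eq_klF {a b : ℝ} (ha : 0 ≤ a) (ha1 : a ≤ 1) (hb : 0 < b) (hb1 : b < 1) :
    klBer a b = klF a b := by
  unfold klBer klF
  have h1 : a * Real.log (a / b) = a * Real.log a - a * Real.log b := by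
    rcases eq_or_lt_of_le ha with h | h
    · simp [← h]
    · rw [Real.log_div h.ne' hb.ne']; ring
  have h2 : (1-a) * Real.log ((1-a) / (1-b))
      = (1-a) * Real.log (1-a) - (1-a) * Real.log (1-b) := by
    rcases eq_or_lt_of_le ha1 with h | h
    · rw [h]; simp
    · rw [Real.log_div (by linarith) (by linarith)]; ring
  rw [h1, h2]; ring

lemma continuous_klF_b (b : ℝ) (hb : 0 < b) (hb1 : b < 1) :
    Continuous (fun a => klF a b) := by
  unfold klF
  have h1 : Continuous fun a : ℝ => a * Real.log a := Real.continuous_mul_log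
  have h2 : Continuous fun a : ℝ => (1 - a) * Real.log (1 - a) :=
    h1.comp (continuous_const.sub continuous_id)
  fun_prop

lemma klF_strictMonoOn {b : ℝ} (hb : 0 < b) (hb1 : b < 1) :
    StrictMonoOn (fun a => klF a b) (Set.Icc b 1) := by
  apply strictMonoOn_of_deriv_pos (convex_Icc b 1)
    ((continuous_klF_b b hb hb1).continuousOn)
  rw [interior_Icc]
  intro x hx
  obtain ⟨hxb, hx1⟩ := hx
  have hx0 : x ≠ 0 := by linarith
  have hx1' : (1 : ℝ) - x ≠ 0 := by intro h; linarith [h]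
  have hd : HasDerivAt (fun a => klF a b)
      ((Real.log x + 1) + (-(Real.log (1-x) + 1)) - Real.log b - (-Real.log (1-b))) x := by
    unfold klF
    have d1 : HasDerivAt (fun a : ℝ => a * Real.log a) (Real.log x + 1) x :=
      Real.hasDerivAt_mul_log hx0
    have d2 : HasDerivAt (fun a : ℝ => (1-a) * Real.log (1-a)) (-(Real.log (1-x) + 1)) x := by
      have := (Real.hasDerivAt_mul_log hx1').comp x
        ((hasDerivAt_id x).const_sub 1)
      simpa [Function.comp_def] using this.neg.neg
    have d3 : HasDerivAt (fun a : ℝ => a * Real.log b) (Real.log b) x := by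
      simpa using (hasDerivAt_id x).mul_const (Real.log b)
    have d4 : HasDerivAt (fun a : ℝ => (1-a) * Real.log (1-b)) (-Real.log (1-b)) x := by
      simpa using ((hasDerivAt_id x).const_sub 1).mul_const (Real.log (1-b))
    exact ((d1.add d2).sub d3).sub d4
  rw [hd.deriv]
  have h1 : Real.log b < Real.log x := Real.log_lt_log hb hxb
  have h2 : Real.log (1-x) < Real.log (1-b) := Real.log_lt_log (by linarith) (by linarith)
  linarith

lemma klBer_strictMonoOn {b : ℝ} (hb : 0 < b) (hb1 : b < 1) :
    StrictMonoOn (fun a => klBer a b) (Set.Icc b 1) := by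
  intro x hx y hy hxy
  have ex : klBer x b = klF x b :=
    klBer_eq_klF (le_trans hb.le hx.1) hx.2 hb hb1
  have ey : klBer y b = klF y b :=
    klBer_eq_klF (le_trans hb.le hy.1) hy.2 hb hb1
  simp only [ex, ey]
  exact klF_strictMonoOn hb hb1 hx hy hxy

lemma klBer_self {p : ℝ} (hp : 0 < p) : klBer p p = 0 := by
  rcases eq_or_ne p 1 with h | h
  · subst h; norm_num [klBer]
  · simp [klBer, div_self hp.ne', div_self (sub_ne_zero.2 (Ne.symm h))]

lemma klBer_one {p : ℝ} (hp : 0 < p) : klBer 1 p = -Real.log p := by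
  simp [klBer, Real.log_div one_ne_zero hp.ne']

lemma p_lt_one' {p ε : ℝ} (hε : 0 < ε) (hpe : p ≤ Real.exp (-ε)) : p < 1 :=
  lt_of_le_of_lt hpe (by rw [← Real.exp_zero]; exact Real.exp_lt_exp.2 (by linarith))

lemma omegaKL_eq_of_root {p ε η : ℝ} (hε : 0 < ε) (hp : 0 < p) (hpe : p ≤ Real.exp (-ε))
    (hη : η ∈ Set.Icc 0 (1-p)) (hr : klBer (p+η) p = ε) : omegaKL p ε = η := by
  have hp1 : p < 1 := p_lt_one' hε hpe
  have hset : {x : ℝ | x ∈ Set.Icc 0 (1-p) ∧ klBer (p + x) p = ε} = {η} := by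
    ext x
    simp only [Set.mem_setOf_eq, Set.mem_singleton_iff]
    constructor
    · rintro ⟨hx, hrx⟩
      have hx1 : p + x ∈ Set.Icc p 1 := Set.mem_Icc.2 ⟨by linarith [hx.1], by linarith [hx.2]⟩
      have hx2 : p + η ∈ Set.Icc p 1 := Set.mem_Icc.2 ⟨by linarith [hη.1], by linarith [hη.2]⟩
      have h12 : klBer (p+x) p = klBer (p+η) p := by rw [hrx, hr]
      have := (klBer_strictMonoOn hp hp1).injOn hx1 hx2 h12
      linarith
    · rintro rfl; exact ⟨hη, hr⟩
  rw [omegaKL, if_neg hp.ne', if_pos hpe, hset, csInf_singleton]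

lemma omegaKL_root {p ε : ℝ} (hε : 0 < ε) (hp : 0 < p) (hpe : p ≤ Real.exp (-ε)) :
    omegaKL p ε ∈ Set.Icc 0 (1-p) ∧ klBer (p + omegaKL p ε) p = ε := by
  have hp1 : p < 1 := p_lt_one' hε hpe
  have hcont : ContinuousOn (fun η => klBer (p+η) p) (Set.Icc 0 (1-p)) := by
    apply ContinuousOn.congr (f := fun η => klF (p+η) p)
    · exact ((continuous_klF_b p hp hp1).comp (continuous_const.add continuous_id)).continuousOn
    · intro η hη
      exact klBer_eq_klF (by linarith [hη.1]) (by linarith [hη.2]) hp hp1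
  have h0 : klBer (p+0) p = 0 := by simpa using klBer_self hp
  have h1 : klBer (p+(1-p)) p = -Real.log p := by
    rw [show p + (1-p) = 1 by ring]; exact klBer_one hp
  have hlog : Real.log p ≤ -ε := by
    have := Real.log_le_log hp hpe
    rwa [Real.log_exp] at this
  have hmem : ε ∈ Set.Icc (klBer (p+0) p) (klBer (p+(1-p)) p) := by
    rw [h0, h1]; exact ⟨hε.le, by linarith⟩
  obtain ⟨η, hη, hr⟩ := intermediate_value_Icc (by linarith : (0:ℝ) ≤ 1-p) hcont hmem
  rw [omegaKL_eq_of_root hε hp hpe hη hr]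
  exact ⟨hη, hr⟩

lemma omegaKL_mem {p ε : ℝ} (hε : 0 < ε) (hp0 : 0 ≤ p) (hp1 : p ≤ 1) :
    omegaKL p ε ∈ Set.Icc 0 (1-p) := by
  rcases eq_or_lt_of_le hp0 with h | h
  · rw [omegaKL, if_pos h.symm]
    exact ⟨le_refl 0, by linarith⟩
  · by_cases hpe : p ≤ Real.exp (-ε)
    · exact (omegaKL_root hε h hpe).1
    · rw [omegaKL, if_neg h.ne', if_neg hpe]
      exact ⟨by linarith, le_refl _⟩

lemma tendsto_klBer_shift {p₀ c ε : ℝ} (hc : 0 ≤ c) (hp₀ : 0 < p₀) (h1 : p₀ + c < 1) :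
    Filter.Tendsto (fun p => klBer (p+c) p) (nhds p₀) (nhds (klBer (p₀+c) p₀)) := by
  have hopen : Set.Ioo 0 (1-c) ∈ nhds p₀ := Ioo_mem_nhds hp₀ (by linarith)
  have hcont : ContinuousAt (fun p => klF (p+c) p) p₀ := by
    unfold klF
    apply ContinuousAt.sub; apply ContinuousAt.sub; apply ContinuousAt.add
    · exact (Real.continuous_mul_log.comp (continuous_id.add continuous_const)).continuousAt
    · exact (Real.continuous_mul_log.comp
        (continuous_const.sub (continuous_id.add continuous_const))).continuousAt
    · exact ((continuous_id.add continuous_const).continuousAt).mul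
        (Real.continuousAt_log hp₀.ne')
    · exact ((continuous_const.sub (continuous_id.add continuous_const)).continuousAt).mul
        (((Real.continuousAt_log (ne_of_gt (by linarith : (0:ℝ) < 1 - p₀)))).comp
          ((continuous_const.sub continuous_id).continuousAt))
  have heq : ∀ᶠ p in nhds p₀, klF (p+c) p = klBer (p+c) p := by
    filter_upwards [hopen] with p hp
    exact (klBer_eq_klF (by linarith [hp.1]) (by linarith [hp.2]) hp.1
      (by linarith [hp.2])).symm
  rw [klBer_eq_klF (by linarith) (by linarith) hp₀ (by linarith)]
  exact hcont.tendsto.congr' heq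

/-- **Lemma 6**: for every `ε > 0`, the map `p ↦ ω(p,ε)` is continuous on `[0,1]`. -/
theorem omegaKL_continuous (ε : ℝ) (hε : 0 < ε) :
    ContinuousOn (fun p => omegaKL p ε) (Set.Icc (0 : ℝ) 1) := by
  have hexp0 : (0:ℝ) < Real.exp (-ε) := Real.exp_pos _
  intro p₀ hp₀mem
  obtain ⟨hp₀0, hp₀1⟩ := hp₀mem
  rcases lt_or_ge (Real.exp (-ε)) p₀ with hB | hA
  · -- Branch B : p₀ > exp (-ε), locally ω = 1 - p
    have hev : (fun p => omegaKL p ε) =ᶠ[nhdsWithin p₀ (Set.Icc 0 1)] (fun p => 1 - p) := by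
      filter_upwards [nhdsWithin_le_nhds (Ioi_mem_nhds hB)] with p hp
      rw [omegaKL, if_neg (ne_of_gt (lt_trans hexp0 hp)), if_neg (not_le.2 hp)]
    have hbase : ContinuousWithinAt (fun p : ℝ => 1 - p) (Set.Icc 0 1) p₀ :=
      (continuous_const.sub continuous_id).continuousWithinAt
    exact hbase.congr_of_eventuallyEq hev
      (by rw [omegaKL, if_neg (ne_of_gt (lt_trans hexp0 hB)), if_neg (not_le.2 hB)])
  rcases eq_or_lt_of_le hp₀0 with h0 | hp
  · -- Case p₀ = 0
    have hp₀ : p₀ = 0 := h0.symm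
    subst hp₀
    have hval : omegaKL 0 ε = 0 := by rw [omegaKL, if_pos rfl]
    have key : Filter.Tendsto (fun p => omegaKL p ε) (nhdsWithin 0 (Set.Icc 0 1))
        (nhds (omegaKL 0 ε)) := by
      rw [hval]
      refine tendsto_order.2 ⟨?_, ?_⟩
      · intro c hc
        filter_upwards [self_mem_nhdsWithin] with p hmem
        have := (omegaKL_mem hε hmem.1 hmem.2).1
        linarith
      · intro c hc
        set δ := min c (1/4) with hδdef
        have hδ0 : 0 < δ := lt_min hc (by norm_num)
        have hδ4 : δ ≤ 1/4 := min_le_right _ _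
        have hδc : δ ≤ c := min_le_left _ _
        set ρ := min (δ * Real.exp (-(ε+1)/δ)) (Real.exp (-ε)) with hρdef
        have hρ0 : 0 < ρ := lt_min (mul_pos hδ0 (Real.exp_pos _)) hexp0
        filter_upwards [nhdsWithin_le_nhds (Iio_mem_nhds hρ0), self_mem_nhdsWithin]
          with p h1 hmem
        rcases eq_or_lt_of_le hmem.1 with h0 | hp0
        · rw [omegaKL, if_pos h0.symm]; exact hc
        · have hpδe : p < δ * Real.exp (-(ε+1)/δ) := lt_of_lt_of_le h1 (min_le_left _ _)
          have hpe : p ≤ Real.exp (-ε) := le_of_lt (lt_of_lt_of_le h1 (min_le_right _ _))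
          have hpδ : p < δ := by
            have hle1 : Real.exp (-(ε+1)/δ) ≤ 1 := by
              rw [Real.exp_le_one_iff]
              apply div_nonpos_of_nonpos_of_nonneg <;> linarith
            nlinarith
          have hp14 : p < 1/4 := lt_of_lt_of_le hpδ hδ4
          have hp1 : p < 1 := by linarith
          -- log bound
          have hlogp : (ε+1)/δ < Real.log δ - Real.log p := by
            have h := Real.log_lt_log hp0 hpδe
            rw [Real.log_mul hδ0.ne' (Real.exp_pos _).ne', Real.log_exp] at h
            have : -(ε+1)/δ = -((ε+1)/δ) := by ring
            rw [this] at h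
            linarith
          have hL : Real.log (δ / p) = Real.log δ - Real.log p :=
            Real.log_div hδ0.ne' hp0.ne'
          have hL2 : Real.log (δ/p) ≤ Real.log ((p+δ)/p) :=
            Real.log_le_log (div_pos hδ0 hp0) (by gcongr; linarith)
          have hx : (ε+1)/δ < Real.log ((p+δ)/p) := by rw [hL] at hL2; linarith
          have hxpos : 0 < Real.log ((p+δ)/p) :=
            lt_trans (by positivity) hx
          have hterm1 : ε + 1 < (p+δ) * Real.log ((p+δ)/p) :=
            calc ε + 1 = δ * ((ε+1)/δ) := by field_simp
            _ < δ * Real.log ((p+δ)/p) := by exact mul_lt_mul_of_pos_left hx hδ0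
            _ ≤ (p+δ) * Real.log ((p+δ)/p) :=
                mul_le_mul_of_nonneg_right (by linarith) hxpos.le
          -- second term bound
          have ht : (1:ℝ)/2 ≤ (1-(p+δ))/(1-p) := by
            rw [le_div_iff₀ (by linarith : (0:ℝ) < 1-p)]
            nlinarith
          have ht1 : (1-(p+δ))/(1-p) ≤ 1 := by
            rw [div_le_one (by linarith)]; linarith
          have hlogt : -1 ≤ Real.log ((1-(p+δ))/(1-p)) := by
            have h2 := Real.log_le_log (by norm_num : (0:ℝ) < 1/2) ht
            have h3 : Real.log (1/2) = -Real.log 2 := by rw [one_div, Real.log_inv]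
            linarith [Real.log_two_lt_d9]
          have hlt0 : Real.log ((1-(p+δ))/(1-p)) ≤ 0 :=
            Real.log_nonpos (by positivity) ht1
          have hterm2 : -1 ≤ (1-(p+δ)) * Real.log ((1-(p+δ))/(1-p)) := by
            nlinarith [mul_nonneg (by linarith : (0:ℝ) ≤ p + δ)
              (by linarith : (0:ℝ) ≤ -Real.log ((1-(p+δ))/(1-p)))]
          have hclaim : ε < klBer (p+δ) p := by
            have hk : klBer (p+δ) p
                = (p+δ) * Real.log ((p+δ)/p)
                  + (1-(p+δ)) * Real.log ((1-(p+δ))/(1-p)) := rfl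
            rw [hk]; linarith
          obtain ⟨hm, hroot⟩ := omegaKL_root hε hp0 hpe
          have hmono := klBer_strictMonoOn hp0 hp1
          have hmem1 : p + omegaKL p ε ∈ Set.Icc p 1 :=
            Set.mem_Icc.2 ⟨by linarith [hm.1], by linarith [hm.2]⟩
          have hmem2 : p + δ ∈ Set.Icc p 1 := Set.mem_Icc.2 ⟨by linarith, by linarith⟩
          have hlt2 : klBer (p + omegaKL p ε) p < klBer (p + δ) p := by
            rw [hroot]; exact hclaim
          have hlt := (hmono.lt_iff_lt hmem1 hmem2).1 hlt2
          linarith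
    exact key
  · -- Case 0 < p₀ ≤ exp (-ε)
    obtain ⟨hmem₀, hroot₀⟩ := omegaKL_root hε hp hA
    have hp₀lt1 : p₀ < 1 := p_lt_one' hε hA
    have hω₀pos : 0 < omegaKL p₀ ε := by
      rcases eq_or_lt_of_le hmem₀.1 with h | h
      · exfalso
        rw [← h, add_zero, klBer_self hp] at hroot₀
        linarith
      · exact h
    have key : Filter.Tendsto (fun p => omegaKL p ε) (nhdsWithin p₀ (Set.Icc 0 1))
        (nhds (omegaKL p₀ ε)) := by
      refine tendsto_order.2 ⟨?_, ?_⟩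
      · -- lower bound
        intro c hc
        set η₁ := max c 0 with hη₁def
        have hη₁ω : η₁ < omegaKL p₀ ε := max_lt hc hω₀pos
        have hη₁0 : 0 ≤ η₁ := le_max_right _ _
        have hη₁lt : p₀ + η₁ < 1 := by linarith [hmem₀.2]
        have hmono₀ := klBer_strictMonoOn hp hp₀lt1
        have hlt : klBer (p₀+η₁) p₀ < ε := by
          rw [← hroot₀]
          exact hmono₀ (Set.mem_Icc.2 ⟨by linarith, by linarith⟩)
            (Set.mem_Icc.2 ⟨by linarith [hmem₀.1], by linarith [hmem₀.2]⟩)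
            (by linarith)
        have hev1 := (tendsto_klBer_shift (ε := ε) hη₁0 hp hη₁lt).eventually_lt_const hlt
        filter_upwards [nhdsWithin_le_nhds hev1,
          nhdsWithin_le_nhds (Ioo_mem_nhds hp (by linarith : p₀ < 1 - η₁))] with p h1 h2
        obtain ⟨hp0, hp1η⟩ := h2
        by_cases hpe : p ≤ Real.exp (-ε)
        · obtain ⟨hm, hroot⟩ := omegaKL_root hε hp0 hpe
          have hplt1 : p < 1 := p_lt_one' hε hpe
          have hmem1 : p + η₁ ∈ Set.Icc p 1 := Set.mem_Icc.2 ⟨by linarith, by linarith⟩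
          have hmem2 : p + omegaKL p ε ∈ Set.Icc p 1 :=
            Set.mem_Icc.2 ⟨by linarith [hm.1], by linarith [hm.2]⟩
          have hlt2 : klBer (p + η₁) p < klBer (p + omegaKL p ε) p := by
            rw [hroot]; exact h1
          have hgt := ((klBer_strictMonoOn hp0 hplt1).lt_iff_lt hmem1 hmem2).1 hlt2
          have : c ≤ η₁ := le_max_left _ _
          linarith
        · rw [omegaKL, if_neg hp0.ne', if_neg hpe]
          have : c ≤ η₁ := le_max_left _ _
          linarith
      · -- upper bound
        intro c hc
        rcases eq_or_lt_of_le hmem₀.2 with hEq | hLt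
        · -- ω₀ = 1 - p₀
          have hev : ∀ᶠ p in nhds p₀, 1 - p < c := by
            have ht : Filter.Tendsto (fun p : ℝ => 1 - p) (nhds p₀) (nhds (1 - p₀)) :=
              (continuous_const.sub continuous_id).tendsto p₀
            exact ht.eventually_lt_const (by rw [← hEq]; exact hc)
          filter_upwards [nhdsWithin_le_nhds hev, self_mem_nhdsWithin] with p h1 hmem
          have := (omegaKL_mem hε hmem.1 hmem.2).2
          linarith
        · -- ω₀ < 1 - p₀ ; first derive p₀ < exp (-ε)
          have hp₀e : p₀ < Real.exp (-ε) := by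
            rcases eq_or_lt_of_le hA with h | h
            · exfalso
              have h1 : klBer (p₀ + (1 - p₀)) p₀ = ε := by
                rw [show p₀ + (1-p₀) = 1 by ring, klBer_one hp, h, Real.log_exp]
                ring
              have h2 := omegaKL_eq_of_root hε hp hA
                (Set.mem_Icc.2 ⟨by linarith, le_refl _⟩) h1
              linarith
            · exact h
          set η₁ := min c ((omegaKL p₀ ε + (1 - p₀))/2) with hη₁def
          have hω₀η : omegaKL p₀ ε < η₁ := lt_min hc (by linarith)
          have hη₁lt : η₁ < 1 - p₀ := lt_of_le_of_lt (min_le_right _ _) (by linarith)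
          have hη₁0 : 0 ≤ η₁ := le_trans hmem₀.1 hω₀η.le
          have hη₁c : η₁ ≤ c := min_le_left _ _
          have hmono₀ := klBer_strictMonoOn hp hp₀lt1
          have hgt : ε < klBer (p₀+η₁) p₀ := by
            rw [← hroot₀]
            exact hmono₀ (Set.mem_Icc.2 ⟨by linarith [hmem₀.1], by linarith⟩)
              (Set.mem_Icc.2 ⟨by linarith, by linarith⟩)
              (by linarith)
          have hev1 := (tendsto_klBer_shift (ε := ε) hη₁0 hp
            (by linarith)).eventually_const_lt hgt
          filter_upwards [nhdsWithin_le_nhds hev1,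
            nhdsWithin_le_nhds (Iio_mem_nhds hp₀e),
            nhdsWithin_le_nhds (Ioo_mem_nhds hp (by linarith : p₀ < 1 - η₁))]
            with p h1 h2 h3
          have hp0 : 0 < p := h3.1
          have hpe : p ≤ Real.exp (-ε) := le_of_lt h2
          obtain ⟨hm, hroot⟩ := omegaKL_root hε hp0 hpe
          have hplt1 : p < 1 := p_lt_one' hε hpe
          have hmem1 : p + omegaKL p ε ∈ Set.Icc p 1 :=
            Set.mem_Icc.2 ⟨by linarith [hm.1], by linarith [hm.2]⟩
          have hmem2 : p + η₁ ∈ Set.Icc p 1 :=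
            Set.mem_Icc.2 ⟨by linarith, by linarith [h3.2]⟩
          have hlt2 : klBer (p + omegaKL p ε) p < klBer (p + η₁) p := by
            rw [hroot]; exact h1
          have hlt := ((klBer_strictMonoOn hp0 hplt1).lt_iff_lt hmem1 hmem2).1 hlt2
          linarith
    exact key
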